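/- arXiv:0901.1339 — 3 statements merged into one kernel-verified Lean document; each statement's English description precedes it below -/
import Mathlib

section
/- The center of the Schrödinger-Virasoro algebra L is the one-dimensional subspace F·M_0. -/
open TensorProduct

/-- Index set for the basis of the Schrödinger–Virasoro algebra:
`Sum.inl n ↔ L_n`, `Sum.inr (Sum.inl n) ↔ Y_{n+1/2}`, `Sum.inr (Sum.inr n) ↔ M_n`. -/
abbrev SVIx : Type := ℤ ⊕ ℤ ⊕ ℤ

variable (F : Type) [Field F] [CharZero F]

/-- Underlying space of the Schrödinger–Virasoro algebra: the free `F`-module on `SVIx`. -/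
abbrev SVL := SVIx →₀ F

noncomputable def Lb (n : ℤ) : SVL F := Finsupp.single (Sum.inl n) 1
noncomputable def Yb (n : ℤ) : SVL F := Finsupp.single (Sum.inr (Sum.inl n)) 1
noncomputable def Mb (n : ℤ) : SVL F := Finsupp.single (Sum.inr (Sum.inr n)) 1

/-- The bracket of basis vectors.  Here `Yb n` stands for `Y_{n+1/2}`, so
`[L_m, Y_{n+1/2}] = ((n+1/2) - m/2) Y_{m+n+1/2}` and
`[Y_{a+1/2}, Y_{b+1/2}] = (b-a) M_{a+b+1}`; all other brackets vanish. -/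
noncomputable def brIx : SVIx → SVIx → SVL F
  | Sum.inl m, Sum.inl n => ((n - m : ℤ) : F) • Lb F (m + n)
  | Sum.inl m, Sum.inr (Sum.inl n) => (((2*n + 1 - m : ℤ) : F) / 2) • Yb F (m + n)
  | Sum.inl m, Sum.inr (Sum.inr n) => ((n : ℤ) : F) • Mb F (m + n)
  | Sum.inr (Sum.inl n), Sum.inl m => -((((2*n + 1 - m : ℤ) : F) / 2) • Yb F (m + n))
  | Sum.inr (Sum.inl a), Sum.inr (Sum.inl b) => ((b - a : ℤ) : F) • Mb F (a + b + 1)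
  | Sum.inr (Sum.inr n), Sum.inl m => -(((n : ℤ) : F) • Mb F (m + n))
  | _, _ => 0

/-- The bracket of the Schrödinger–Virasoro algebra: the bilinear extension of `brIx`. -/
noncomputable def bk : SVL F →ₗ[F] SVL F →ₗ[F] SVL F :=
  Finsupp.lsum F fun i => LinearMap.toSpanSingleton F (SVL F →ₗ[F] SVL F)
    (Finsupp.lsum F fun j => LinearMap.toSpanSingleton F (SVL F) (brIx F i j))

abbrev VV := SVL F ⊗[F] SVL F

noncomputable instance : AddCommGroup (VV F) := inferInstance

noncomputable instance : Zero (VV F) :=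
  (inferInstance : AddCommMonoid (VV F)).toAddMonoid.toZero

/-- The adjoint diagonal action of `L` on `L ⊗ L`, as a bilinear map:
`x · (a ⊗ b) = [x,a] ⊗ b + a ⊗ [x,b]`. -/
noncomputable def adVb : SVL F →ₗ[F] VV F →ₗ[F] VV F :=
  ((LinearMap.rTensorHom (SVL F) : (SVL F →ₗ[F] SVL F) →ₗ[F] (VV F →ₗ[F] VV F)) ∘ₗ bk F)
    + ((LinearMap.lTensorHom (SVL F) : (SVL F →ₗ[F] SVL F) →ₗ[F] (VV F →ₗ[F] VV F)) ∘ₗ bk F)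

/-- The twist map `τ(x ⊗ y) = y ⊗ x`. -/
noncomputable def tau : VV F →ₗ[F] VV F := (TensorProduct.comm F (SVL F) (SVL F)).toLinearMap

/-- The map `1 - τ`. -/
noncomputable def oneMinusTau : VV F →ₗ[F] VV F where
  toFun v := v - tau F v
  map_add' x y := by
    simp only [map_add]; exact sub_add_sub_comm x (tau F x) y (tau F y) ▸ rfl
  map_smul' c x := by simp only [map_smul, RingHom.id_apply, smul_sub]

/-- `Im (1 - τ) ⊂ L ⊗ L`. -/
noncomputable def skewIm : Submodule F (VV F) := LinearMap.range (oneMinusTau F)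

set_option linter.unusedSectionVars false

lemma bk_apply_single (x : SVL F) (j k : SVIx) :
    (bk F x (Finsupp.single j 1)) k = x.sum fun i c => c * (brIx F i j) k := by
  rw [bk]
  rw [Finsupp.lsum_apply]
  rw [LinearMap.finsupp_sum_apply]
  rw [Finsupp.sum_apply]
  refine Finsupp.sum_congr fun i _ => ?_
  simp only [LinearMap.toSpanSingleton_apply, LinearMap.smul_apply, Finsupp.smul_apply,
    Finsupp.lsum_apply, smul_eq_mul]
  congr 1
  rw [Finsupp.sum_single_index] <;> simp

set_option linter.unusedSectionVars false

lemma brIx_YM (a b : ℤ) : brIx F (Sum.inr (Sum.inl a)) (Sum.inr (Sum.inr b)) = 0 := rfl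
lemma brIx_MY (a b : ℤ) : brIx F (Sum.inr (Sum.inr a)) (Sum.inr (Sum.inl b)) = 0 := rfl
lemma brIx_MM (a b : ℤ) : brIx F (Sum.inr (Sum.inr a)) (Sum.inr (Sum.inr b)) = 0 := rfl

lemma sum_key (x : SVL F) (v : SVIx → F) (i0 : SVIx) (hv : ∀ i, i ≠ i0 → v i = 0) :
    (x.sum fun i c => c * v i) = x i0 * v i0 := by
  classical
  rw [Finsupp.sum]
  rw [Finset.sum_eq_single i0]
  · intro b _ hb; rw [hv b hb, mul_zero]
  · intro h; rw [Finsupp.notMem_support_iff.mp h, zero_mul]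

lemma bk_Mb0 (y : SVL F) : bk F (Mb F 0) y = 0 := by
  rw [Mb, bk, Finsupp.lsum_single, LinearMap.toSpanSingleton_apply, one_smul, Finsupp.lsum_apply]
  rw [Finsupp.sum]
  apply Finset.sum_eq_zero
  intro j _
  rcases j with m | m | m <;>
    simp [brIx, brIx_MY, brIx_MM, LinearMap.toSpanSingleton_apply]

/-- The center of the Schrödinger–Virasoro algebra is `F • M₀`. -/
theorem sv_center_eq_span_M0 :
    ∀ x : SVL F, (∀ y : SVL F, bk F x y = 0) ↔ x ∈ Submodule.span F {Mb F 0} := by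
  intro x
  constructor
  · intro h
    have hL : ∀ m : ℤ, x (Sum.inl m) = 0 := by
      intro m
      have h1 := congrArg (fun f => f (Sum.inr (Sum.inr (m+1)))) (h (Finsupp.single (Sum.inr (Sum.inr 1)) 1))
      simp only [Finsupp.zero_apply] at h1
      rw [bk_apply_single] at h1
      rw [sum_key F x _ (Sum.inl m)] at h1
      · have : (brIx F (Sum.inl m) (Sum.inr (Sum.inr 1))) (Sum.inr (Sum.inr (m+1))) = 1 := by
          simp [brIx, Mb, Finsupp.single_apply]
        rw [this, mul_one] at h1
        exact h1
      · intro i hi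
        rcases i with m' | m' | m'
        · simp only [brIx, Mb, Finsupp.smul_apply, Finsupp.single_apply]
          have hne : ¬ (m' + 1 = m + 1) := by
            intro hc
            have : m' = m := by omega
            exact hi (by rw [this])
          rw [if_neg (by simpa using hne)]
          simp
        · rw [brIx_YM]; rfl
        · rw [brIx_MM]; rfl
    have hY : ∀ m : ℤ, x (Sum.inr (Sum.inl m)) = 0 := by
      intro m
      have h1 := congrArg (fun f => f (Sum.inr (Sum.inl m))) (h (Finsupp.single (Sum.inl 0) 1))
      simp only [Finsupp.zero_apply] at h1
      rw [bk_apply_single] at h1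
      rw [sum_key F x _ (Sum.inr (Sum.inl m))] at h1
      · have hv : (brIx F (Sum.inr (Sum.inl m)) (Sum.inl 0)) (Sum.inr (Sum.inl m)) = -(((2*m+1 : ℤ) : F)/2) := by
          simp [brIx, Yb, Finsupp.single_apply]
        rw [hv] at h1
        have h2 : (((2*m+1 : ℤ) : F)) ≠ 0 := by
          rw [Int.cast_ne_zero]; omega
        have h3 : -(((2*m+1 : ℤ) : F)/2) ≠ 0 := by
          simp only [ne_eq, neg_eq_zero, div_eq_zero_iff]
          push_neg
          exact ⟨h2, two_ne_zero⟩
        rcases mul_eq_zero.mp h1 with h1 | h1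
        · exact h1
        · exact absurd h1 h3
      · intro i hi
        rcases i with m' | m' | m'
        · simp only [brIx, Lb, Finsupp.smul_apply, Finsupp.single_apply]
          rw [if_neg (by simp)]
          simp
        · simp only [brIx, Yb, Finsupp.neg_apply, Finsupp.smul_apply, Finsupp.single_apply]
          have hne : ¬ (0 + m' = m) := by
            intro hc
            exact hi (by rw [show m' = m by omega])
          rw [if_neg (by simpa using hne)]
          simp
        · simp only [brIx, Mb, Finsupp.neg_apply, Finsupp.smul_apply, Finsupp.single_apply]
          rw [if_neg (by simp)]
          simp
    have hM : ∀ m : ℤ, m ≠ 0 → x (Sum.inr (Sum.inr m)) = 0 := by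
      intro m hm
      have h1 := congrArg (fun f => f (Sum.inr (Sum.inr m))) (h (Finsupp.single (Sum.inl 0) 1))
      simp only [Finsupp.zero_apply] at h1
      rw [bk_apply_single] at h1
      rw [sum_key F x _ (Sum.inr (Sum.inr m))] at h1
      · have hv : (brIx F (Sum.inr (Sum.inr m)) (Sum.inl 0)) (Sum.inr (Sum.inr m)) = -((m : ℤ) : F) := by
          simp [brIx, Mb, Finsupp.single_apply]
        rw [hv] at h1
        have h2 : ((m : ℤ) : F) ≠ 0 := Int.cast_ne_zero.mpr hm
        rcases mul_eq_zero.mp h1 with h1 | h1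
        · exact h1
        · exact absurd (neg_eq_zero.mp h1) h2
      · intro i hi
        rcases i with m' | m' | m'
        · simp only [brIx, Lb, Finsupp.smul_apply, Finsupp.single_apply]
          rw [if_neg (by simp)]
          simp
        · simp only [brIx, Yb, Finsupp.neg_apply, Finsupp.smul_apply, Finsupp.single_apply]
          rw [if_neg (by simp)]
          simp
        · simp only [brIx, Mb, Finsupp.neg_apply, Finsupp.smul_apply, Finsupp.single_apply]
          have hne : ¬ (0 + m' = m) := by
            intro hc
            exact hi (by rw [show m' = m by omega])
          rw [if_neg (by simpa using hne)]
          simp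
    rw [Submodule.mem_span_singleton]
    refine ⟨x (Sum.inr (Sum.inr 0)), ?_⟩
    ext k
    rw [Mb, Finsupp.smul_apply, Finsupp.single_apply]
    rcases k with m | m | m
    · simp [hL m]
    · simp [hY m]
    · by_cases hm : m = 0
      · subst hm; simp
      · rw [if_neg (by simpa using (Ne.symm hm))]
        simp [hM m hm]
  · intro hx y
    obtain ⟨a, rfl⟩ := Submodule.mem_span_singleton.mp hx
    rw [map_smul, LinearMap.smul_apply, bk_Mb0, smul_zero]
end

section
/- The Schrödinger-Virasoro algebra L is generated as a Lie algebra by the five elements L_1, L_{−1}, L_2, L_{−2}, Y_{1/2}. -/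
open TensorProduct

variable (F : Type) [Field F] [CharZero F]

lemma bk_single (i j : SVIx) :
    bk F (Finsupp.single i (1:F)) (Finsupp.single j (1:F)) = brIx F i j := by
  simp [bk, Finsupp.lsum_single, LinearMap.toSpanSingleton_apply]

lemma bkLL (m n : ℤ) : bk F (Lb F m) (Lb F n) = ((n - m : ℤ) : F) • Lb F (m + n) := by
  rw [Lb, Lb, bk_single]; rfl

lemma bkLY (m n : ℤ) :
    bk F (Lb F m) (Yb F n) = (((2*n + 1 - m : ℤ) : F) / 2) • Yb F (m + n) := by
  rw [Lb, Yb, bk_single]; rfl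

lemma bkYY (a b : ℤ) : bk F (Yb F a) (Yb F b) = ((b - a : ℤ) : F) • Mb F (a + b + 1) := by
  rw [Yb, Yb, bk_single]; rfl

/-- The Schrödinger–Virasoro algebra is generated by `L₁, L₋₁, L₂, L₋₂, Y_{1/2}`:
every submodule containing these five elements and closed under the bracket is everything. -/
theorem sv_generators :
    ∀ P : Submodule F (SVL F),
      Lb F 1 ∈ P → Lb F (-1) ∈ P → Lb F 2 ∈ P → Lb F (-2) ∈ P → Yb F 0 ∈ P →
      (∀ x y : SVL F, x ∈ P → y ∈ P → bk F x y ∈ P) →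
      P = ⊤ := by
  intro P h1 hm1 h2 hm2 hY hbk
  have extract : ∀ (c : F) (v : SVL F), c ≠ 0 → c • v ∈ P → v ∈ P := by
    intro c v hc h
    have := P.smul_mem c⁻¹ h
    rwa [smul_smul, inv_mul_cancel₀ hc, one_smul] at this
  have hL : ∀ n : ℤ, Lb F n ∈ P := by
    have h0 : Lb F 0 ∈ P := by
      have := hbk _ _ h1 hm1
      rw [bkLL, show (1 + -1 : ℤ) = 0 from by ring] at this
      refine extract _ _ ?_ this
      exact Int.cast_ne_zero.mpr (by omega)
    intro n
    induction n using Int.induction_on with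
    | zero => exact h0
    | succ n ih =>
      rcases eq_or_ne n 0 with rfl | hn0
      · exact h1
      rcases eq_or_ne n 1 with rfl | hn1
      · exact h2
      have := hbk _ _ h1 ih
      rw [bkLL, show (1 + (n:ℤ)) = (n:ℤ) + 1 from by ring] at this
      refine extract _ _ ?_ this
      exact Int.cast_ne_zero.mpr (by omega)
    | pred n ih =>
      rcases eq_or_ne n 0 with rfl | hn0
      · exact hm1
      rcases eq_or_ne n 1 with rfl | hn1
      · exact hm2
      have := hbk _ _ hm1 ih
      rw [bkLL, show (-1 + -(n:ℤ)) = -(n:ℤ) - 1 from by ring] at this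
      refine extract _ _ ?_ this
      exact Int.cast_ne_zero.mpr (by omega)
  have hYall : ∀ n : ℤ, Yb F n ∈ P := by
    intro n
    rcases eq_or_ne n 1 with rfl | hn1
    · have h' := hbk _ _ (hL (-1)) hY
      rw [bkLY, show ((-1:ℤ) + 0) = -1 from by ring] at h'
      have h'' := extract _ _ (div_ne_zero (Int.cast_ne_zero.mpr (by omega)) two_ne_zero) h'
      have := hbk _ _ (hL 2) h''
      rw [bkLY, show ((2:ℤ) + -1) = 1 from by ring] at this
      refine extract _ _ ?_ this
      exact div_ne_zero (Int.cast_ne_zero.mpr (by omega)) two_ne_zero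
    · have := hbk _ _ (hL n) hY
      rw [bkLY, show ((n:ℤ) + 0) = n from by ring] at this
      refine extract _ _ ?_ this
      exact div_ne_zero (Int.cast_ne_zero.mpr (by omega)) two_ne_zero
  have hM : ∀ n : ℤ, Mb F n ∈ P := by
    intro n
    rcases eq_or_ne n (-1) with rfl | hn
    · have := hbk _ _ (hYall 0) (hYall (-2))
      rw [bkYY, show ((0:ℤ) + -2 + 1) = -1 from by ring] at this
      refine extract _ _ ?_ this
      exact Int.cast_ne_zero.mpr (by omega)
    · have := hbk _ _ (hYall (-1)) (hYall n)
      rw [bkYY, show ((-1:ℤ) + n + 1) = n from by ring] at this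
      refine extract _ _ ?_ this
      exact Int.cast_ne_zero.mpr (by omega)
  rw [eq_top_iff]
  intro x _
  induction x using Finsupp.induction with
  | zero => exact P.zero_mem
  | single_add a b f _ _ ih =>
    refine P.add_mem ?_ (ih trivial)
    have hone : Finsupp.single a (1:F) ∈ P := by
      rcases a with n | n | n
      · exact hL n
      · exact hYall n
      · exact hM n
    rw [show Finsupp.single a b = b • Finsupp.single a (1:F) from by
      rw [Finsupp.smul_single, smul_eq_mul, mul_one]]
    exact P.smul_mem b hone
end

section
/- Let L be the Schrödinger-Virasoro algebra and r ∈ Im(1−τ) ⊂ L ⊗ L, where τ is the twist map. Then r satisfies the classical Yang-Baxter equation c(r) = 0 if and only if r satisfies the modified Yang-Baxter equation x·c(r) = 0 for all x ∈ L. -/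
open TensorProduct

variable (F : Type) [Field F] [CharZero F]

abbrev T3 := SVL F ⊗[F] (SVL F ⊗[F] SVL F)

/-- The bracket as a linear map on `L ⊗ L`. -/
noncomputable def lb : VV F →ₗ[F] SVL F := TensorProduct.lift (bk F)

/-- The linear map with `(a ⊗ b) ⊗ (a' ⊗ b') ↦ [a,a'] ⊗ b ⊗ b' + a ⊗ [b,a'] ⊗ b' + a ⊗ a' ⊗ [b,b']`,
so that the classical Yang–Baxter expression is `c(r) = cmap (r ⊗ r)`. -/
noncomputable def cmap : (VV F ⊗[F] VV F) →ₗ[F] T3 F :=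
  ((TensorProduct.map (lb F) (LinearMap.id : VV F →ₗ[F] VV F)) ∘ₗ
      (TensorProduct.tensorTensorTensorComm F (SVL F) (SVL F) (SVL F) (SVL F)).toLinearMap)
  + ((LinearMap.lTensor (SVL F)
        ((TensorProduct.map (lb F) (LinearMap.id : SVL F →ₗ[F] SVL F)) ∘ₗ
          (TensorProduct.assoc F (SVL F) (SVL F) (SVL F)).symm.toLinearMap)) ∘ₗ
      (TensorProduct.assoc F (SVL F) (SVL F) (VV F)).toLinearMap)
  + (((TensorProduct.assoc F (SVL F) (SVL F) (SVL F)).toLinearMap) ∘ₗ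
      (TensorProduct.map (LinearMap.id : VV F →ₗ[F] VV F) (lb F)) ∘ₗ
      (TensorProduct.tensorTensorTensorComm F (SVL F) (SVL F) (SVL F) (SVL F)).toLinearMap)

/-- The classical Yang–Baxter expression `c(r)`. -/
noncomputable def cyb (r : VV F) : T3 F := cmap F (r ⊗ₜ[F] r)

/-- The adjoint diagonal action of `x ∈ L` on `L ⊗ L ⊗ L`. -/
noncomputable def adT3 (x : SVL F) : T3 F →ₗ[F] T3 F :=
  LinearMap.rTensor (VV F) (bk F x) + LinearMap.lTensor (SVL F) (adVb F x)

/-- The cyclic map `ξ : x₁ ⊗ x₂ ⊗ x₃ ↦ x₂ ⊗ x₃ ⊗ x₁`. -/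
noncomputable def xi : T3 F →ₗ[F] T3 F :=
  (TensorProduct.assoc F (SVL F) (SVL F) (SVL F)).toLinearMap ∘ₗ
    (TensorProduct.comm F (SVL F) (VV F)).toLinearMap

/-- `1 + ξ + ξ²` applied to an element of `L ⊗ L ⊗ L`. -/
noncomputable def cyclicSum (t : T3 F) : T3 F := t + xi F t + xi F (xi F t)

noncomputable instance : Zero (T3 F) :=
  (inferInstance : AddCommMonoid (T3 F)).toAddMonoid.toZero


set_option linter.unusedSectionVars false
set_option synthInstance.maxHeartbeats 400000
set_option maxHeartbeats 1000000

namespace SVAux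

abbrev I3 : Type := SVIx × SVIx × SVIx

def I0 : SVIx := Sum.inr (Sum.inr 0)

def P0 : I3 := (I0, I0, I0)

variable (F : Type) [Field F] [CharZero F]

noncomputable def E : T3 F ≃ₗ[F] (I3 →₀ F) :=
  (TensorProduct.congr (LinearEquiv.refl F (SVL F))
      (finsuppTensorFinsupp' F SVIx SVIx)).trans
    (finsuppTensorFinsupp' F SVIx (SVIx × SVIx))

lemma E_tmul (x y z : SVL F) (p : I3) :
    E F (x ⊗ₜ[F] (y ⊗ₜ[F] z)) p = x p.1 * (y p.2.1 * z p.2.2) := by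
  obtain ⟨i, j, k⟩ := p
  simp [E, finsuppTensorFinsupp'_apply_apply]

/-- shift of an index by `m`. -/
def sh (m : ℤ) : SVIx → SVIx
  | Sum.inl n => Sum.inl (n + m)
  | Sum.inr (Sum.inl n) => Sum.inr (Sum.inl (n + m))
  | Sum.inr (Sum.inr n) => Sum.inr (Sum.inr (n + m))

/-- eigen-coefficient of `ad L_m` on basis vector `i`. -/
noncomputable def cf (m : ℤ) : SVIx → F
  | Sum.inl n => ((n - m : ℤ) : F)
  | Sum.inr (Sum.inl n) => ((2*n + 1 - m : ℤ) : F) / 2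
  | Sum.inr (Sum.inr n) => ((n : ℤ) : F)

lemma sh_sh (m : ℤ) (i : SVIx) : sh (-m) (sh m i) = i := by
  rcases i with n | n | n <;> simp [sh]

lemma sh_sh' (m : ℤ) (i : SVIx) : sh m (sh (-m) i) = i := by
  rcases i with n | n | n <;> simp [sh]

lemma bk_single (i j : SVIx) (c d : F) :
    bk F (Finsupp.single i c) (Finsupp.single j d) = (c * d) • brIx F i j := by
  simp [bk, Finsupp.lsum_single, LinearMap.toSpanSingleton_apply, smul_smul]

lemma bk_Lb_single (m : ℤ) (i : SVIx) (c : F) :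
    bk F (Lb F m) (Finsupp.single i c) = (c * cf F m i) • Finsupp.single (sh m i) (1:F) := by
  rw [Lb, bk_single]
  rcases i with n | n | n <;>
    rw [brIx] <;>
    simp only [cf, sh, Lb, Yb, Mb, smul_smul, one_mul, smul_neg, mul_neg, neg_neg,
      Finsupp.smul_single, smul_eq_mul, mul_one, add_comm m n]

lemma bk_Lb_apply (m : ℤ) (x : SVL F) (j : SVIx) :
    (bk F (Lb F m) x) j = cf F m (sh (-m) j) * x (sh (-m) j) := by
  induction x using Finsupp.induction_linear with
  | zero => simp
  | add f g hf hg => simp [map_add, hf, hg, Finsupp.add_apply, mul_add]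
  | single i c =>
    rw [bk_Lb_single]
    rcases eq_or_ne (sh m i) j with h | h
    · subst h
      simp [Finsupp.single_apply, sh_sh, mul_comm]
    · have h2 : sh (-m) j ≠ i := fun e => h (by rw [← e, sh_sh'])
      simp [Finsupp.single_apply, h, Ne.symm h2]

/-- The master equation: coefficient of `ad L_m t` at `q`. -/
lemma master (m : ℤ) (t : T3 F) (q : I3) :
    E F (adT3 F (Lb F m) t) q =
      cf F m (sh (-m) q.1) * E F t (sh (-m) q.1, q.2.1, q.2.2)
      + cf F m (sh (-m) q.2.1) * E F t (q.1, sh (-m) q.2.1, q.2.2)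
      + cf F m (sh (-m) q.2.2) * E F t (q.1, q.2.1, sh (-m) q.2.2) := by
  induction t using TensorProduct.induction_on with
  | zero => simp only [map_zero, Finsupp.zero_apply, mul_zero, add_zero]
  | add a b ha hb => simp only [map_add, Finsupp.add_apply, ha, hb]; ring
  | tmul x yz =>
    induction yz using TensorProduct.induction_on with
    | zero =>
      simp only [TensorProduct.tmul_zero, map_zero, Finsupp.zero_apply, mul_zero, add_zero]
    | add a b ha hb =>
      simp only [TensorProduct.tmul_add, map_add, Finsupp.add_apply, ha, hb]; ring
    | tmul y z =>
      simp only [adT3, LinearMap.add_apply, LinearMap.rTensor_tmul,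
        LinearMap.lTensor_tmul, adVb, LinearMap.comp_apply,
        LinearMap.coe_rTensorHom, LinearMap.coe_lTensorHom,
        LinearMap.rTensor_tmul, LinearMap.lTensor_tmul, map_add,
        TensorProduct.tmul_add, Finsupp.add_apply, E_tmul, bk_Lb_apply]
      ring
end SVAux

namespace SVAux
variable (F : Type) [Field F] [CharZero F]

/-- integer part of an index -/
def ip : SVIx → ℤ
  | Sum.inl n => n
  | Sum.inr (Sum.inl n) => n
  | Sum.inr (Sum.inr n) => n

lemma ip_sh (m : ℤ) (i : SVIx) : ip (sh m i) = ip i + m := by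
  rcases i with n | n | n <;> rfl

lemma cf_zero (N : ℕ) (i : SVIx) (hb : (ip i).natAbs ≤ N)
    (h : cf F (2*(N:ℤ)+2) i = 0) : i = I0 := by
  rcases i with n | n | n
  · exfalso
    rw [cf, Int.cast_eq_zero, sub_eq_zero] at h
    simp only [ip] at hb
    omega
  · exfalso
    rw [cf, div_eq_zero_iff] at h
    rcases h with h | h
    · rw [Int.cast_eq_zero] at h
      simp only [ip] at hb
      omega
    · exact two_ne_zero h
  · rw [cf, Int.cast_eq_zero] at h
    simp [I0, h]

lemma support_killed (t : T3 F) (h : ∀ m : ℤ, adT3 F (Lb F m) t = 0)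
    (p : I3) (hp : p ≠ P0) : E F t p = 0 := by
  set u := E F t with hu
  classical
  set N : ℕ := u.support.sup
    (fun p => max (ip p.1).natAbs (max (ip p.2.1).natAbs (ip p.2.2).natAbs)) with hN
  have hbound : ∀ q ∈ u.support,
      (ip q.1).natAbs ≤ N ∧ (ip q.2.1).natAbs ≤ N ∧ (ip q.2.2).natAbs ≤ N := by
    intro q hq
    have := Finset.le_sup (f := fun p : I3 =>
      max (ip p.1).natAbs (max (ip p.2.1).natAbs (ip p.2.2).natAbs)) hq
    rw [← hN] at this
    omega
  have hzero : ∀ q : I3, N < (ip q.1).natAbs ∨ N < (ip q.2.1).natAbs ∨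
      N < (ip q.2.2).natAbs → u q = 0 := by
    intro q hq
    by_contra hne
    have := hbound q (Finsupp.mem_support_iff.mpr hne)
    omega
  set m : ℤ := 2*(N:ℤ) + 2 with hm
  by_contra hne
  have hmem := Finsupp.mem_support_iff.mpr hne
  obtain ⟨h1, h2, h3⟩ := hbound p hmem
  have key : ∀ q : I3, cf F m (sh (-m) q.1) * u (sh (-m) q.1, q.2.1, q.2.2)
      + cf F m (sh (-m) q.2.1) * u (q.1, sh (-m) q.2.1, q.2.2)
      + cf F m (sh (-m) q.2.2) * u (q.1, q.2.1, sh (-m) q.2.2) = 0 := by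
    intro q
    rw [hu, ← master F m t q, h m]
    simp only [map_zero, Finsupp.zero_apply]
  have hNm : ∀ (i : SVIx), (ip i).natAbs ≤ N → N < (ip (sh m i)).natAbs := by
    intro i hi
    rw [ip_sh]
    omega
  obtain ⟨i, j, k⟩ := p
  have c1 : cf F m i = 0 := by
    have := key (sh m i, j, k)
    rw [sh_sh] at this
    rw [hzero (sh m i, sh (-m) j, k) (Or.inl (hNm i h1)),
        hzero (sh m i, j, sh (-m) k) (Or.inl (hNm i h1))] at this
    simp only [mul_zero, add_zero, zero_mul, zero_add] at this
    exact (mul_eq_zero.mp this).resolve_right hne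
  have c2 : cf F m j = 0 := by
    have := key (i, sh m j, k)
    rw [sh_sh] at this
    rw [hzero (sh (-m) i, sh m j, k) (Or.inr (Or.inl (hNm j h2))),
        hzero (i, sh m j, sh (-m) k) (Or.inr (Or.inl (hNm j h2)))] at this
    simp only [mul_zero, add_zero, zero_mul, zero_add] at this
    exact (mul_eq_zero.mp this).resolve_right hne
  have c3 : cf F m k = 0 := by
    have := key (i, j, sh m k)
    rw [sh_sh] at this
    rw [hzero (sh (-m) i, j, sh m k) (Or.inr (Or.inr (hNm k h3))),
        hzero (i, sh (-m) j, sh m k) (Or.inr (Or.inr (hNm k h3)))] at this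
    simp only [mul_zero, add_zero, zero_mul, zero_add] at this
    exact (mul_eq_zero.mp this).resolve_right hne
  refine hp ?_
  have e1 := cf_zero F N i h1 c1
  have e2 := cf_zero F N j h2 c2
  have e3 := cf_zero F N k h3 c3
  simp [P0, e1, e2, e3]

end SVAux

namespace SVAux
variable (F : Type) [Field F] [CharZero F]

noncomputable def phi : T3 F →ₗ[F] F :=
  (Finsupp.lapply P0 : (I3 →₀ F) →ₗ[F] F) ∘ₗ (E F).toLinearMap

lemma phi_tmul (x y z : SVL F) :
    phi F (x ⊗ₜ[F] (y ⊗ₜ[F] z)) = x I0 * (y I0 * z I0) := by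
  simp [phi, E_tmul, P0]

lemma brIx_skew (i j : SVIx) : (brIx F i j) I0 = -((brIx F j i) I0) := by
  rcases i with n | n | n <;> rcases j with m | m | m <;>
    simp [brIx, Lb, Yb, Mb, I0, Finsupp.single_apply, Finsupp.smul_apply] <;>
    split_ifs <;> push_cast <;> ring_nf <;> omega

lemma bk_skew (x y : SVL F) : (bk F x y) I0 = -((bk F y x) I0) := by
  induction x using Finsupp.induction_linear with
  | zero => simp
  | add f g hf hg => simp [map_add, Finsupp.add_apply, hf, hg]; ring
  | single i c =>
    induction y using Finsupp.induction_linear with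
    | zero => simp
    | add f g hf hg => simp [map_add, Finsupp.add_apply, hf, hg]; ring
    | single j d =>
      rw [bk_single, bk_single]
      simp only [Finsupp.smul_apply, smul_eq_mul]
      rw [brIx_skew]
      ring

lemma cmap_tmul (x y x' y' : SVL F) :
    cmap F ((x ⊗ₜ[F] y) ⊗ₜ[F] (x' ⊗ₜ[F] y')) =
      bk F x x' ⊗ₜ[F] (y ⊗ₜ[F] y') + x ⊗ₜ[F] (bk F y x' ⊗ₜ[F] y')
        + x ⊗ₜ[F] (x' ⊗ₜ[F] bk F y y') := by
  simp [cmap, lb, TensorProduct.tensorTensorTensorComm_tmul, TensorProduct.assoc_tmul,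
    TensorProduct.assoc_symm_tmul]

lemma tau_tmul (x y : SVL F) : tau F (x ⊗ₜ[F] y) = y ⊗ₜ[F] x := by
  simp [tau]

lemma phi_cmap_skew (u v : VV F) :
    phi F (cmap F (u ⊗ₜ[F] v)) = - phi F (cmap F (tau F v ⊗ₜ[F] tau F u)) := by
  induction u using TensorProduct.induction_on with
  | zero => simp
  | add a b ha hb =>
    simp only [TensorProduct.add_tmul, TensorProduct.tmul_add, map_add, ha, hb]; ring
  | tmul x y =>
    induction v using TensorProduct.induction_on with
    | zero => simp
    | add a b ha hb =>
      simp only [TensorProduct.add_tmul, TensorProduct.tmul_add, map_add, ha, hb]; ring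
    | tmul x' y' =>
      rw [tau_tmul, tau_tmul, cmap_tmul, cmap_tmul]
      simp only [map_add, phi_tmul]
      rw [bk_skew F y' y, bk_skew F x' y, bk_skew F x' x]
      ring

lemma tau_tau (v : VV F) : tau F (tau F v) = v := by
  induction v using TensorProduct.induction_on with
  | zero => simp
  | add a b ha hb => simp [map_add, ha, hb]
  | tmul x y => rw [tau_tmul, tau_tmul]

end SVAux


open SVAux

/-- For `r ∈ Im(1-τ)`, `r` satisfies the classical Yang–Baxter equation iff it
satisfies the modified Yang–Baxter equation. -/
theorem sv_cybe_iff_mybe :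
    ∀ r ∈ skewIm F, (cyb F r = 0 ↔ ∀ x : SVL F, adT3 F x (cyb F r) = 0) := by
  intro r hr
  constructor
  · intro h x
    rw [h]
    exact map_zero _
  · intro h
    obtain ⟨s, rfl⟩ := hr
    have htau : tau F (oneMinusTau F s) = -(oneMinusTau F s) := by
      have hs : oneMinusTau F s = s - tau F s := rfl
      rw [hs, map_sub, tau_tau, neg_sub]
    have hphi : phi F (cyb F (oneMinusTau F s)) = 0 := by
      have h1 := phi_cmap_skew F (oneMinusTau F s) (oneMinusTau F s)
      rw [htau, TensorProduct.neg_tmul, TensorProduct.tmul_neg, neg_neg] at h1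
      have h2 : phi F (cmap F (oneMinusTau F s ⊗ₜ[F] oneMinusTau F s))
          + phi F (cmap F (oneMinusTau F s ⊗ₜ[F] oneMinusTau F s)) = 0 := by
        nth_rewrite 2 [h1]
        exact add_neg_cancel _
      exact add_self_eq_zero.mp h2
    set t := cyb F (oneMinusTau F s) with ht
    have hzero : E F t = 0 := by
      ext p
      by_cases hp : p = P0
      · subst hp
        simpa [phi] using hphi
      · simpa using support_killed F t (fun m => h (Lb F m)) p hp
    calc t = (E F).symm (E F t) := (LinearEquiv.symm_apply_apply _ _).symm
    _ = 0 := by rw [hzero, map_zero]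
end
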